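/- For s ∈ (0,2) set τ = √(2/s − 1) and define q_s(x) = (4πsτ)^{−1/2}((τ−i)e^{iτx} + (τ+i)e^{−iτx}) for x > 0. Then for every x > 0, ∫₀^∞ e^{−|x−y|} q_s(y) dy = s·q_s(x), i.e. q_s is a generalized eigenfunction of the Wiener–Hopf (Lalescu) integral operator with kernel e^{−|x−y|} for the eigenvalue s. -/

import Mathlib

open MeasureTheory Real Set

noncomputable section

/-- The normalized generalized eigenfunction q_s of Lalescu's operator:
q_s(x) = (4πsτ)^{-1/2}((τ-i)e^{iτx} + (τ+i)e^{-iτx}) with τ = √(2/s - 1). -/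
def lalescuEigenfun (s x : ℝ) : ℂ :=
  (Real.sqrt (4 * π * s * Real.sqrt (2 / s - 1)) : ℂ)⁻¹ *
    (((Real.sqrt (2 / s - 1) : ℂ) - Complex.I) *
        Complex.exp (Complex.I * (Real.sqrt (2 / s - 1) : ℂ) * (x : ℂ)) +
      ((Real.sqrt (2 / s - 1) : ℂ) + Complex.I) *
        Complex.exp (-(Complex.I * (Real.sqrt (2 / s - 1) : ℂ) * (x : ℂ))))

/-- Integrability of `exp (c y)` on `Ioi A` when `Re c < 0`. -/
lemma integrableOn_cexp_Ioi {c : ℂ} (hc : c.re < 0) (A : ℝ) :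
    IntegrableOn (fun y : ℝ => Complex.exp (c * y)) (Ioi A) := by
  have hcont : Continuous fun y : ℝ => Complex.exp (c * y) := by fun_prop
  refine Integrable.mono' (g := fun y : ℝ => Real.exp (c.re * y)) ?_
    hcont.aestronglyMeasurable ?_
  · have := exp_neg_integrableOn_Ioi A (neg_pos.2 hc)
    exact (by simpa using this : IntegrableOn (fun y : ℝ => Real.exp (c.re * y)) (Ioi A))
  · filter_upwards with y
    simp [Complex.norm_exp, Complex.mul_re]

/-- `∫_{Ioi A} exp (c y) dy = - exp (c A) / c` when `Re c < 0`. -/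
lemma integral_cexp_Ioi {c : ℂ} (hc : c.re < 0) (A : ℝ) :
    ∫ y in Ioi A, Complex.exp (c * y) = -Complex.exp (c * A) / c := by
  have hc0 : c ≠ 0 := by intro h; rw [h] at hc; simp at hc
  have hderiv : ∀ y ∈ Ici A, HasDerivAt (fun y : ℝ => Complex.exp (c * y) / c)
      (Complex.exp (c * y)) y := by
    intro y _
    rw [← mul_div_cancel_right₀ (Complex.exp (c * y)) hc0]
    apply ((Complex.hasDerivAt_exp _).comp y _).div_const c
    simpa only [mul_one, id] using ((hasDerivAt_id (y : ℂ)).const_mul c).comp_ofReal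
  have htend : Filter.Tendsto (fun y : ℝ => Complex.exp (c * y) / c) Filter.atTop (nhds 0) := by
    rw [tendsto_zero_iff_norm_tendsto_zero]
    have h1 : Filter.Tendsto (fun y : ℝ => Real.exp (c.re * y) / ‖c‖)
        Filter.atTop (nhds 0) := by
      rw [show (0:ℝ) = 0 / ‖c‖ by simp]
      exact (Real.tendsto_exp_atBot.comp
        (Filter.tendsto_id.const_mul_atTop_of_neg hc)).div_const _
    refine h1.congr fun y => ?_
    simp [Complex.norm_exp, Complex.mul_re]
  have := integral_Ioi_of_hasDerivAt_of_tendsto' hderiv (integrableOn_cexp_Ioi hc A) htend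
  rw [this]; ring

/-- q_s is a generalized eigenfunction of the Lalescu integral operator with kernel
e^{-|x-y|} for the eigenvalue s: ∫₀^∞ e^{-|x-y|} q_s(y) dy = s·q_s(x) for all x > 0. -/
theorem lalescu_generalized_eigenfunction
    (s : ℝ) (hs : s ∈ Set.Ioo (0 : ℝ) 2) (x : ℝ) (hx : 0 < x) :
    ∫ y in Set.Ioi (0 : ℝ), (Real.exp (-|x - y|) : ℂ) * lalescuEigenfun s y =
      (s : ℂ) * lalescuEigenfun s x := by
  obtain ⟨hs0, hs2⟩ := hs
  have hτnn : (0:ℝ) ≤ 2 / s - 1 := by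
    rw [sub_nonneg, le_div_iff₀ hs0]; linarith
  set τ : ℝ := Real.sqrt (2 / s - 1) with hτdef
  have hτ2 : τ ^ 2 = 2 / s - 1 := Real.sq_sqrt hτnn
  set t : ℂ := (τ : ℂ) with htdef
  set C : ℂ := (Real.sqrt (4 * π * s * τ) : ℂ)⁻¹ with hCdef
  set g : ℝ → ℂ := fun y =>
    (t - Complex.I) * Complex.exp (Complex.I * t * y) +
      (t + Complex.I) * Complex.exp (-(Complex.I * t * y)) with hgdef
  have hq : ∀ y : ℝ, lalescuEigenfun s y = C * g y := fun y => rfl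
  set a : ℂ := 1 + Complex.I * t with hadef
  set b : ℂ := 1 - Complex.I * t with hbdef
  have hta : t - Complex.I = -Complex.I * a := by
    rw [hadef]; linear_combination t * Complex.I_sq
  have htb : t + Complex.I = Complex.I * b := by
    rw [hbdef]; linear_combination t * Complex.I_sq
  have htim : t.im = 0 := by simp [htdef]
  have ha0 : a ≠ 0 := by
    intro h
    have := congrArg Complex.re h
    simp [hadef, Complex.add_re, Complex.mul_re, htim] at this
  have hb0 : b ≠ 0 := by
    intro h
    have := congrArg Complex.re h
    simp [hbdef, Complex.sub_re, Complex.mul_re, htim] at this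
  have hs0' : (s : ℂ) ≠ 0 := by exact_mod_cast ne_of_gt hs0
  have htc : t ^ 2 = 2 / (s : ℂ) - 1 := by
    rw [htdef]
    rw [show ((τ:ℂ))^2 = ((τ^2 : ℝ) : ℂ) by push_cast; ring, hτ2]
    push_cast; ring
  have hst : (s : ℂ) * t ^ 2 = 2 - s := by
    field_simp at htc; linear_combination htc
  have hsab : (s : ℂ) * (a * b) = 2 := by
    rw [hadef, hbdef]
    linear_combination ((s:ℂ) - 2) * Complex.I_sq - Complex.I ^ 2 * hst
  -- split the integral
  have hmeas : MeasurableSet (Ioi x) := measurableSet_Ioi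
  -- the integrand on (x, ∞) equals a nice exponential combination
  have hcre : (-1 + Complex.I * t).re < 0 := by
    simp [Complex.add_re, Complex.mul_re, htim]
  have hdre : (-1 - Complex.I * t).re < 0 := by
    simp [Complex.sub_re, Complex.mul_re, htim]
  have hIoi_eq : EqOn (fun y : ℝ => (Real.exp (-|x - y|) : ℂ) * g y)
      (fun y : ℝ => (t - Complex.I) * Complex.exp (x:ℂ) * Complex.exp ((-1 + Complex.I * t) * y)
        + (t + Complex.I) * Complex.exp (x:ℂ) * Complex.exp ((-1 - Complex.I * t) * y))
      (Ioi x) := by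
    intro y hy
    have hyx : x ≤ y := le_of_lt hy
    have habs : |x - y| = y - x := by rw [abs_sub_comm]; exact abs_of_nonneg (by linarith)
    simp only
    rw [habs, Complex.ofReal_exp]
    have h1 : Complex.exp ((-(y - x) : ℝ)) * Complex.exp (Complex.I * t * y) =
        Complex.exp (x:ℂ) * Complex.exp ((-1 + Complex.I * t) * y) := by
      rw [← Complex.exp_add, ← Complex.exp_add]; congr 1; push_cast; ring
    have h2 : Complex.exp ((-(y - x) : ℝ)) * Complex.exp (-(Complex.I * t * y)) =
        Complex.exp (x:ℂ) * Complex.exp ((-1 - Complex.I * t) * y) := by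
      rw [← Complex.exp_add, ← Complex.exp_add]; congr 1; push_cast; ring
    rw [hgdef]
    linear_combination (t - Complex.I) * h1 + (t + Complex.I) * h2
  have hint2 : IntegrableOn (fun y : ℝ => (Real.exp (-|x - y|) : ℂ) * g y) (Ioi x) := by
    refine (IntegrableOn.congr_fun ?_ hIoi_eq.symm hmeas)
    exact (((integrableOn_cexp_Ioi hcre x).const_mul _).add
      ((integrableOn_cexp_Ioi hdre x).const_mul _))
  have hint1 : IntegrableOn (fun y : ℝ => (Real.exp (-|x - y|) : ℂ) * g y) (Ioc 0 x) := by
    apply Continuous.integrableOn_Ioc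
    fun_prop
  have hkey : ∫ y in Ioi (0:ℝ), (Real.exp (-|x - y|) : ℂ) * g y = (s : ℂ) * g x := by
    rw [← Ioc_union_Ioi_eq_Ioi hx.le,
      setIntegral_union (Ioc_disjoint_Ioi le_rfl) hmeas hint1 hint2]
    -- first piece
    have hp1 : ∫ y in Ioc (0:ℝ) x, (Real.exp (-|x - y|) : ℂ) * g y =
        Complex.exp (-(x:ℂ)) * ((t - Complex.I) * ((Complex.exp (a * x) - 1) / a)
          + (t + Complex.I) * ((Complex.exp (b * x) - 1) / b)) := by
      rw [← intervalIntegral.integral_of_le hx.le]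
      have hcong : EqOn (fun y : ℝ => (Real.exp (-|x - y|) : ℂ) * g y)
          (fun y : ℝ => (t - Complex.I) * Complex.exp (-(x:ℂ)) * Complex.exp (a * y)
            + (t + Complex.I) * Complex.exp (-(x:ℂ)) * Complex.exp (b * y))
          (uIcc 0 x) := by
        intro y hy
        rw [uIcc_of_le hx.le] at hy
        have habs : |x - y| = x - y := abs_of_nonneg (by linarith [hy.2])
        simp only
        rw [habs, Complex.ofReal_exp]
        have h1 : Complex.exp ((-(x - y) : ℝ)) * Complex.exp (Complex.I * t * y) =
            Complex.exp (-(x:ℂ)) * Complex.exp (a * y) := by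
          rw [← Complex.exp_add, ← Complex.exp_add]; congr 1
          rw [hadef]; push_cast; ring
        have h2 : Complex.exp ((-(x - y) : ℝ)) * Complex.exp (-(Complex.I * t * y)) =
            Complex.exp (-(x:ℂ)) * Complex.exp (b * y) := by
          rw [← Complex.exp_add, ← Complex.exp_add]; congr 1
          rw [hbdef]; push_cast; ring
        rw [hgdef]
        linear_combination (t - Complex.I) * h1 + (t + Complex.I) * h2
      rw [intervalIntegral.integral_congr hcong]
      have hia : IntervalIntegrable (fun y : ℝ => Complex.exp (a * y)) volume 0 x :=
        (Continuous.intervalIntegrable (by fun_prop) 0 x)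
      have hib : IntervalIntegrable (fun y : ℝ => Complex.exp (b * y)) volume 0 x :=
        (Continuous.intervalIntegrable (by fun_prop) 0 x)
      rw [intervalIntegral.integral_add (hia.const_mul _) (hib.const_mul _),
        intervalIntegral.integral_const_mul, intervalIntegral.integral_const_mul,
        integral_exp_mul_complex ha0, integral_exp_mul_complex hb0]
      simp only [Complex.ofReal_zero, mul_zero, Complex.exp_zero]
      ring
    -- second piece
    have hp2 : ∫ y in Ioi x, (Real.exp (-|x - y|) : ℂ) * g y =
        (t - Complex.I) * Complex.exp (x:ℂ)
            * (-Complex.exp ((-1 + Complex.I * t) * x) / (-1 + Complex.I * t))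
          + (t + Complex.I) * Complex.exp (x:ℂ)
            * (-Complex.exp ((-1 - Complex.I * t) * x) / (-1 - Complex.I * t)) := by
      rw [setIntegral_congr_fun hmeas hIoi_eq]
      rw [integral_add ((integrableOn_cexp_Ioi hcre x).const_mul _)
        ((integrableOn_cexp_Ioi hdre x).const_mul _),
        integral_const_mul, integral_const_mul,
        integral_cexp_Ioi hcre, integral_cexp_Ioi hdre]
    rw [hp1, hp2]
    -- final algebra
    have hc_eq : -1 + Complex.I * t = -b := by rw [hbdef]; ring
    have hd_eq : -1 - Complex.I * t = -a := by rw [hadef]; ring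
    have hE1 : Complex.exp (a * x) = Complex.exp (x:ℂ) * Complex.exp (Complex.I * t * x) := by
      rw [← Complex.exp_add]; congr 1; rw [hadef]; ring
    have hE2 : Complex.exp (b * x) = Complex.exp (x:ℂ) * Complex.exp (-(Complex.I * t * x)) := by
      rw [← Complex.exp_add]; congr 1; rw [hbdef]; ring
    have hE3 : Complex.exp ((-1 + Complex.I * t) * x) =
        Complex.exp (-(x:ℂ)) * Complex.exp (Complex.I * t * x) := by
      rw [← Complex.exp_add]; congr 1; ring
    have hE4 : Complex.exp ((-1 - Complex.I * t) * x) =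
        Complex.exp (-(x:ℂ)) * Complex.exp (-(Complex.I * t * x)) := by
      rw [← Complex.exp_add]; congr 1; ring
    have hXY : Complex.exp (x:ℂ) * Complex.exp (-(x:ℂ)) = 1 := by
      rw [← Complex.exp_add]; simp
    rw [hE1, hE2, hE3, hE4, hc_eq, hd_eq, hgdef]
    beta_reduce
    rw [hta, htb]
    set X : ℂ := Complex.exp (x:ℂ)
    set Y : ℂ := Complex.exp (-(x:ℂ))
    set E : ℂ := Complex.exp (Complex.I * t * x)
    set F : ℂ := Complex.exp (-(Complex.I * t * x))
    have hab2 : a + b = 2 := by rw [hadef, hbdef]; ring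
    clear_value X Y E F a b
    field_simp
    linear_combination ((b*F - a*E)*(a+b))*hXY +
      (b*F - a*E)*hab2 - (b*F - a*E)*hsab
  calc ∫ y in Ioi (0:ℝ), (Real.exp (-|x - y|) : ℂ) * lalescuEigenfun s y
      = ∫ y in Ioi (0:ℝ), C * ((Real.exp (-|x - y|) : ℂ) * g y) := by
        congr 1; funext y; rw [hq]; ring
    _ = C * ∫ y in Ioi (0:ℝ), (Real.exp (-|x - y|) : ℂ) * g y := integral_const_mul _ _
    _ = C * ((s:ℂ) * g x) := by rw [hkey]
    _ = (s : ℂ) * lalescuEigenfun s x := by rw [hq]; ring
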